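/- Assume k ≥ 2 and let T ⊆ ker D be the union of the six families: (1) f_{i,j} for 1 ≤ j ≤ k, 0 ≤ i ≤ ⌊n_j/2⌋; (2) ε_{s_{i₂,j₂}}(x_{i₁,j₁}) for 1 ≤ j₁ < j₂ ≤ k, ⌊(n_{j₁}−1)/2⌋ < i₁ ≤ n_{j₁}, 0 ≤ i₂ ≤ ⌊(n_{j₂}−1)/2⌋; (3) ε_{s_{i₂,j}}(x_{i₁,j}) for 1 ≤ j ≤ k, 0 ≤ i₂ ≤ ⌊(n_j−1)/2⌋, i₂ ≤ i₁ ≤ n_j; (4) ε_{s_{i₂,j₂}}(x_{i₁,j₁}) for 1 ≤ j₂ < j₁ ≤ k, 0 ≤ i₁ ≤ n_{j₁}, 0 ≤ i₂ ≤ ⌊(n_{j₂}−1)/2⌋; (5) w_{j₁,j₂} for 1 ≤ j₁ ≠ j₂ ≤ l′; (6) z_j for l′ < j ≤ l. Then every element of T has total degree at most 2n − 1, where n = Σ_{j=1}^{k}(n_j + 1). -/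

import Mathlib

open MvPolynomial Finset

variable (𝕜 : Type) [Field 𝕜] [CharZero 𝕜] (k : ℕ) (n : Fin k → ℕ)

/-- The variable `x_{i,j}` (as `X ⟨j,i⟩`), or `0` if `i` is out of range. -/
noncomputable def Xv (j : Fin k) (i : ℕ) : MvPolynomial (Σ j : Fin k, Fin (n j + 1)) 𝕜 :=
  if h : i ≤ n j then MvPolynomial.X ⟨j, ⟨i, Nat.lt_succ_of_le h⟩⟩ else 0

/-- The Weitzenböck derivation `D` with `D x_{0,j} = 0` and `D x_{i,j} = x_{i-1,j}`. -/
noncomputable def Dw : Derivation 𝕜 (MvPolynomial (Σ j : Fin k, Fin (n j + 1)) 𝕜)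
    (MvPolynomial (Σ j : Fin k, Fin (n j + 1)) 𝕜) :=
  mkDerivation 𝕜 fun v => if (v.2 : ℕ) = 0 then 0 else Xv 𝕜 k n v.1 ((v.2 : ℕ) - 1)

/-- The invariants `f_{i,j}`. -/
noncomputable def fP (j : Fin k) (i : ℕ) : MvPolynomial (Σ j : Fin k, Fin (n j + 1)) 𝕜 :=
  if i = 0 then Xv 𝕜 k n j 0
  else (∑ q ∈ Finset.range i, C ((-1 : 𝕜) ^ q) * Xv 𝕜 k n j q * Xv 𝕜 k n j (2 * i - q))
    + C ((-1 : 𝕜) ^ i / 2) * Xv 𝕜 k n j i ^ 2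

/-- The local slices `s_{i,j}`. -/
noncomputable def sP (j : Fin k) (i : ℕ) : MvPolynomial (Σ j : Fin k, Fin (n j + 1)) 𝕜 :=
  if i = 0 then Xv 𝕜 k n j 1
  else ∑ q ∈ Finset.range (i + 1),
    C ((-1 : 𝕜) ^ q * ((2 * i + 1 - 2 * q : ℕ) : 𝕜) / 2) * Xv 𝕜 k n j q * Xv 𝕜 k n j (2 * i + 1 - q)

/-- `ε_s(f) = ∑_{q=0}^{ν} ((-1)^q/q!) (D^q f) s^q (D s)^{ν - q}`. -/
noncomputable def eps (s f : MvPolynomial (Σ j : Fin k, Fin (n j + 1)) 𝕜) (ν : ℕ) :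
    MvPolynomial (Σ j : Fin k, Fin (n j + 1)) 𝕜 :=
  ∑ q ∈ Finset.range (ν + 1),
    C ((-1 : 𝕜) ^ q / (q.factorial : 𝕜)) * ((⇑(Dw 𝕜 k n))^[q] f) * s ^ q *
      (Dw 𝕜 k n s) ^ (ν - q)

/-- The derivation `Δ_j` with `Δ_j x_{i,j} = (n_j - i)(i+1) x_{i+1,j}`. -/
noncomputable def Δw (j : Fin k) : Derivation 𝕜 (MvPolynomial (Σ j : Fin k, Fin (n j + 1)) 𝕜)
    (MvPolynomial (Σ j : Fin k, Fin (n j + 1)) 𝕜) :=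
  mkDerivation 𝕜 fun v =>
    if v.1 = j then C ((((n v.1 - (v.2 : ℕ)) * ((v.2 : ℕ) + 1) : ℕ)) : 𝕜) * Xv 𝕜 k n v.1 ((v.2 : ℕ) + 1)
    else 0

/-- The semitransvectant `w_{j₁,j₂}`. -/
noncomputable def wP (j1 j2 : Fin k) : MvPolynomial (Σ j : Fin k, Fin (n j + 1)) 𝕜 :=
  ∑ q ∈ Finset.range (Nat.lcm (n j1) (n j2) + 1),
    C ((-1 : 𝕜) ^ q * ((Nat.lcm (n j1) (n j2)).factorial : 𝕜)) *
      ((⇑(Δw 𝕜 k n j1))^[Nat.lcm (n j1) (n j2) - q] (Xv 𝕜 k n j1 0 ^ (Nat.lcm (n j1) (n j2) / n j1))) *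
      ((⇑(Δw 𝕜 k n j2))^[q] (Xv 𝕜 k n j2 0 ^ (Nat.lcm (n j1) (n j2) / n j2)))

/-- The semitransvectant `z_j`. -/
noncomputable def zP (j : Fin k) : MvPolynomial (Σ j : Fin k, Fin (n j + 1)) 𝕜 :=
  ∑ q ∈ Finset.range (n j + 1),
    C ((-1 : 𝕜) ^ q * ((n j).factorial : 𝕜)) *
      ((⇑(Δw 𝕜 k n j))^[n j - q] (Xv 𝕜 k n j 0)) *
      ((⇑(Δw 𝕜 k n j))^[q] (fP 𝕜 k n j (n j / 4)))


section Helpers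

variable {𝕂 : Type} [Field 𝕂] {σ : Type*}

lemma td_mul_le {p q : MvPolynomial σ 𝕂} {a b : ℕ} (hp : p.totalDegree ≤ a)
    (hq : q.totalDegree ≤ b) : (p * q).totalDegree ≤ a + b :=
  (totalDegree_mul _ _).trans (add_le_add hp hq)

lemma deriv_monomial_td_le (D : Derivation 𝕂 (MvPolynomial σ 𝕂) (MvPolynomial σ 𝕂))
    (hD : ∀ v, (D (X v)).totalDegree ≤ 1) (m : σ →₀ ℕ) (a : 𝕂) :
    (D (monomial m a)).totalDegree ≤ m.sum fun _ e => e := by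
  induction m using Finsupp.induction generalizing a with
  | zero =>
    have h : (monomial (0 : σ →₀ ℕ) a) = C a := (MvPolynomial.C_apply).symm
    have h2 : D (C a) = 0 := MvPolynomial.algebraMap_eq 𝕂 σ ▸ D.map_algebraMap a
    simp [h, h2]
  | single_add v e m hv he ih =>
    rw [monomial_single_add, D.leibniz, D.leibniz_pow]
    have hsum : ((Finsupp.single v e + m).sum fun _ e => e) = e + m.sum fun _ e => e := by
      rw [Finsupp.sum_add_index' (fun _ => rfl) (fun _ _ _ => rfl), Finsupp.sum_single_index rfl]
    rw [hsum]
    refine (totalDegree_add _ _).trans (max_le ?_ ?_)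
    · rw [smul_eq_mul]
      refine td_mul_le ((totalDegree_pow _ _).trans (by simp [totalDegree_X])) (ih a)
    · rw [smul_eq_mul, nsmul_eq_mul, smul_eq_mul]
      rw [add_comm e]
      refine td_mul_le (totalDegree_monomial_le _ _) ?_
      have : ((e : MvPolynomial σ 𝕂)).totalDegree = 0 := by
        rw [← MvPolynomial.C_eq_coe_nat, totalDegree_C]
      calc ((e : MvPolynomial σ 𝕂) * (X v ^ (e - 1) * D (X v))).totalDegree
          ≤ 0 + ((e - 1) + 1) := td_mul_le (le_of_eq this)
            (td_mul_le ((totalDegree_pow _ _).trans (by simp [totalDegree_X])) (hD v))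
        _ ≤ e := by omega
    
lemma deriv_td_le (D : Derivation 𝕂 (MvPolynomial σ 𝕂) (MvPolynomial σ 𝕂))
    (hD : ∀ v, (D (X v)).totalDegree ≤ 1) (p : MvPolynomial σ 𝕂) :
    (D p).totalDegree ≤ p.totalDegree := by
  conv_lhs => rw [p.as_sum]
  rw [map_sum]
  refine (totalDegree_finset_sum _ _).trans (Finset.sup_le fun m hm => ?_)
  exact (deriv_monomial_td_le D hD m _).trans (le_totalDegree hm)

lemma deriv_iter_td_le (D : Derivation 𝕂 (MvPolynomial σ 𝕂) (MvPolynomial σ 𝕂))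
    (hD : ∀ v, (D (X v)).totalDegree ≤ 1) (q : ℕ) (p : MvPolynomial σ 𝕂) :
    ((⇑D)^[q] p).totalDegree ≤ p.totalDegree := by
  induction q generalizing p with
  | zero => simp
  | succ q ih =>
    rw [Function.iterate_succ_apply]
    exact (ih _).trans (deriv_td_le D hD p)

end Helpers


section Specific

variable (𝕜 : Type) [Field 𝕜] [CharZero 𝕜] (k : ℕ) (n : Fin k → ℕ)

lemma Xv_td_le (j : Fin k) (i : ℕ) : (Xv 𝕜 k n j i).totalDegree ≤ 1 := by
  rw [Xv]; split
  · simp [totalDegree_X]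
  · simp

lemma Dw_X_td : ∀ v, ((Dw 𝕜 k n) (X v)).totalDegree ≤ 1 := by
  intro v
  rw [Dw, mkDerivation_X]
  split
  · simp
  · exact Xv_td_le 𝕜 k n _ _

lemma Δw_X_td (j : Fin k) : ∀ v, ((Δw 𝕜 k n j) (X v)).totalDegree ≤ 1 := by
  intro v
  rw [Δw, mkDerivation_X]
  split
  · exact le_trans (td_mul_le (le_of_eq (totalDegree_C _)) (Xv_td_le 𝕜 k n _ _)) (by norm_num)
  · simp

lemma sP_td (j : Fin k) (i : ℕ) : (sP 𝕜 k n j i).totalDegree ≤ 2 := by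
  rw [sP]; split
  · exact (Xv_td_le 𝕜 k n _ _).trans one_le_two
  · refine (totalDegree_finset_sum _ _).trans (Finset.sup_le fun q _ => ?_)
    exact le_trans (td_mul_le (td_mul_le (le_of_eq (totalDegree_C _)) (Xv_td_le 𝕜 k n _ _))
      (Xv_td_le 𝕜 k n _ _)) (by norm_num)

lemma fP_td (j : Fin k) (i : ℕ) : (fP 𝕜 k n j i).totalDegree ≤ 2 := by
  rw [fP]; split
  · exact (Xv_td_le 𝕜 k n _ _).trans one_le_two
  · refine (totalDegree_add _ _).trans (max_le ?_ ?_)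
    · refine (totalDegree_finset_sum _ _).trans (Finset.sup_le fun q _ => ?_)
      exact le_trans (td_mul_le (td_mul_le (le_of_eq (totalDegree_C _)) (Xv_td_le 𝕜 k n _ _))
        (Xv_td_le 𝕜 k n _ _)) (by norm_num)
    · have h2 : ((Xv 𝕜 k n j i) ^ 2).totalDegree ≤ 2 := by
        refine (totalDegree_pow _ _).trans ?_
        calc 2 * (Xv 𝕜 k n j i).totalDegree ≤ 2 * 1 :=
              Nat.mul_le_mul_left _ (Xv_td_le 𝕜 k n j i)
          _ = 2 := by norm_num
      exact le_trans (td_mul_le (le_of_eq (totalDegree_C _)) h2) (by norm_num)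

lemma eps_td (s f : MvPolynomial (Σ j : Fin k, Fin (n j + 1)) 𝕜) (ν : ℕ)
    (hs : s.totalDegree ≤ 2) (hf : f.totalDegree ≤ 1) :
    (eps 𝕜 k n s f ν).totalDegree ≤ 2 * ν + 1 := by
  rw [eps]
  refine (totalDegree_finset_sum _ _).trans (Finset.sup_le fun q hq => ?_)
  rw [Finset.mem_range] at hq
  have h1 : ((⇑(Dw 𝕜 k n))^[q] f).totalDegree ≤ 1 :=
    (deriv_iter_td_le _ (Dw_X_td 𝕜 k n) q f).trans hf
  have h2 : (s ^ q).totalDegree ≤ q * 2 :=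
    (totalDegree_pow _ _).trans (Nat.mul_le_mul_left _ hs)
  have h3 : ((Dw 𝕜 k n s) ^ (ν - q)).totalDegree ≤ (ν - q) * 2 :=
    (totalDegree_pow _ _).trans (Nat.mul_le_mul_left _ ((deriv_td_le _ (Dw_X_td 𝕜 k n) s).trans hs))
  calc (C ((-1 : 𝕜) ^ q / (q.factorial : 𝕜)) * ((⇑(Dw 𝕜 k n))^[q] f) * s ^ q *
        (Dw 𝕜 k n s) ^ (ν - q)).totalDegree
      ≤ ((0 + 1) + q * 2) + (ν - q) * 2 :=
        td_mul_le (td_mul_le (td_mul_le (le_of_eq (totalDegree_C _)) h1) h2) h3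
    _ ≤ 2 * ν + 1 := by omega

lemma Xv_pow_td (j : Fin k) (i e : ℕ) : ((Xv 𝕜 k n j i) ^ e).totalDegree ≤ e := by
  refine (totalDegree_pow _ _).trans ?_
  calc e * (Xv 𝕜 k n j i).totalDegree ≤ e * 1 := Nat.mul_le_mul_left _ (Xv_td_le 𝕜 k n j i)
    _ = e := mul_one e

lemma wP_td (j1 j2 : Fin k) : (wP 𝕜 k n j1 j2).totalDegree ≤
    Nat.lcm (n j1) (n j2) / n j1 + Nat.lcm (n j1) (n j2) / n j2 := by
  rw [wP]
  refine (totalDegree_finset_sum _ _).trans (Finset.sup_le fun q _ => ?_)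
  have h1 := (deriv_iter_td_le _ (Δw_X_td 𝕜 k n j1) (Nat.lcm (n j1) (n j2) - q)
    (Xv 𝕜 k n j1 0 ^ (Nat.lcm (n j1) (n j2) / n j1))).trans (Xv_pow_td 𝕜 k n j1 0 _)
  have h2 := (deriv_iter_td_le _ (Δw_X_td 𝕜 k n j2) q
    (Xv 𝕜 k n j2 0 ^ (Nat.lcm (n j1) (n j2) / n j2))).trans (Xv_pow_td 𝕜 k n j2 0 _)
  exact le_trans (td_mul_le (td_mul_le (le_of_eq (totalDegree_C _)) h1) h2) (by omega)

lemma zP_td (j : Fin k) : (zP 𝕜 k n j).totalDegree ≤ 3 := by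
  rw [zP]
  refine (totalDegree_finset_sum _ _).trans (Finset.sup_le fun q _ => ?_)
  have h1 := (deriv_iter_td_le _ (Δw_X_td 𝕜 k n j) (n j - q) (Xv 𝕜 k n j 0)).trans
    (Xv_td_le 𝕜 k n j 0)
  have h2 := (deriv_iter_td_le _ (Δw_X_td 𝕜 k n j) q (fP 𝕜 k n j (n j / 4))).trans
    (fP_td 𝕜 k n j (n j / 4))
  exact le_trans (td_mul_le (td_mul_le (le_of_eq (totalDegree_C _)) h1) h2) (by omega)

end Specific

/- STATEMENT 14: every element of the separating set `T` has total degree at most `2n - 1`,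
where `n = ∑ (n_j + 1)`. -/
theorem T_degree_bound (𝕜 : Type) [Field 𝕜] [CharZero 𝕜] (k : ℕ) (hk : 2 ≤ k)
    (n : Fin k → ℕ) (l' l : ℕ) (hl'l : l' ≤ l) (hlk : l ≤ k)
    -- `n_j ≡ 2 (mod 4)` for `j < l'`
    (h2 : ∀ j : Fin k, (j : ℕ) < l' → n j % 4 = 2)
    -- `n_j ≡ 0 (mod 4)` for `l' ≤ j < l`
    (h0 : ∀ j : Fin k, l' ≤ (j : ℕ) → (j : ℕ) < l → n j % 4 = 0)
    -- `n_j` odd for `l ≤ j`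
    (hodd : ∀ j : Fin k, l ≤ (j : ℕ) → Odd (n j))
    (T : Set (MvPolynomial (Σ j : Fin k, Fin (n j + 1)) 𝕜))
    (hT : T =
      -- (1)  f_{i,j},  1 ≤ j ≤ k,  0 ≤ i ≤ ⌊n_j/2⌋
      {p | ∃ (j : Fin k) (i : ℕ), 2 * i ≤ n j ∧ p = fP 𝕜 k n j i} ∪
      -- (2)  ε_{s_{i₂,j₂}}(x_{i₁,j₁}),  j₁ < j₂,  ⌊(n_{j₁}-1)/2⌋ < i₁ ≤ n_{j₁},
      --      0 ≤ i₂ ≤ ⌊(n_{j₂}-1)/2⌋  (note ν(x_{i₁,j₁}) = i₁)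
      {p | ∃ (j1 j2 : Fin k) (i1 i2 : ℕ), j1 < j2 ∧ n j1 ≤ 2 * i1 ∧ i1 ≤ n j1 ∧
        2 * i2 + 1 ≤ n j2 ∧ p = eps 𝕜 k n (sP 𝕜 k n j2 i2) (Xv 𝕜 k n j1 i1) i1} ∪
      -- (3)  ε_{s_{i₂,j}}(x_{i₁,j}),  0 ≤ i₂ ≤ ⌊(n_j-1)/2⌋,  i₂ ≤ i₁ ≤ n_j
      {p | ∃ (j : Fin k) (i1 i2 : ℕ), 2 * i2 + 1 ≤ n j ∧ i2 ≤ i1 ∧ i1 ≤ n j ∧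
        p = eps 𝕜 k n (sP 𝕜 k n j i2) (Xv 𝕜 k n j i1) i1} ∪
      -- (4)  ε_{s_{i₂,j₂}}(x_{i₁,j₁}),  j₂ < j₁,  0 ≤ i₁ ≤ n_{j₁},  0 ≤ i₂ ≤ ⌊(n_{j₂}-1)/2⌋
      {p | ∃ (j1 j2 : Fin k) (i1 i2 : ℕ), j2 < j1 ∧ i1 ≤ n j1 ∧ 2 * i2 + 1 ≤ n j2 ∧
        p = eps 𝕜 k n (sP 𝕜 k n j2 i2) (Xv 𝕜 k n j1 i1) i1} ∪
      -- (5)  w_{j₁,j₂},  1 ≤ j₁ ≠ j₂ ≤ l'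
      {p | ∃ j1 j2 : Fin k, j1 ≠ j2 ∧ (j1 : ℕ) < l' ∧ (j2 : ℕ) < l' ∧ p = wP 𝕜 k n j1 j2} ∪
      -- (6)  z_j,  l' < j ≤ l
      {p | ∃ j : Fin k, l' ≤ (j : ℕ) ∧ (j : ℕ) < l ∧ p = zP 𝕜 k n j}) :
    ∀ t ∈ T, t.totalDegree ≤ 2 * (∑ j, (n j + 1)) - 1 := by
  intro t ht
  have hkN : k ≤ ∑ j, (n j + 1) := by
    calc k = ∑ _j : Fin k, 1 := by simp
      _ ≤ ∑ j, (n j + 1) := Finset.sum_le_sum fun j _ => by omega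
  have hnN : ∀ j : Fin k, n j + 2 ≤ ∑ j, (n j + 1) := by
    intro j
    obtain ⟨j', hj'⟩ := Fintype.exists_ne_of_one_lt_card
      (by rw [Fintype.card_fin]; omega) j
    have hpair : (∑ i ∈ ({j, j'} : Finset (Fin k)), (n i + 1)) = (n j + 1) + (n j' + 1) :=
      Finset.sum_pair (Ne.symm hj')
    have hle : (∑ i ∈ ({j, j'} : Finset (Fin k)), (n i + 1)) ≤ ∑ j, (n j + 1) :=
      Finset.sum_le_sum_of_subset (Finset.subset_univ _)
    omega
  subst hT
  simp only [Set.mem_union, Set.mem_setOf_eq] at ht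
  rcases ht with ((((ht | ht) | ht) | ht) | ht) | ht
  · obtain ⟨j, i, hi, rfl⟩ := ht
    exact (fP_td 𝕜 k n j i).trans (by omega)
  · obtain ⟨j1, j2, i1, i2, _, _, hb, _, rfl⟩ := ht
    refine (eps_td 𝕜 k n _ _ i1 (sP_td 𝕜 k n j2 i2) (Xv_td_le 𝕜 k n j1 i1)).trans ?_
    have := hnN j1; omega
  · obtain ⟨j, i1, i2, _, _, hb, rfl⟩ := ht
    refine (eps_td 𝕜 k n _ _ i1 (sP_td 𝕜 k n j i2) (Xv_td_le 𝕜 k n j i1)).trans ?_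
    have := hnN j; omega
  · obtain ⟨j1, j2, i1, i2, _, hb, _, rfl⟩ := ht
    refine (eps_td 𝕜 k n _ _ i1 (sP_td 𝕜 k n j2 i2) (Xv_td_le 𝕜 k n j1 i1)).trans ?_
    have := hnN j1; omega
  · obtain ⟨j1, j2, _, hj1, hj2, rfl⟩ := ht
    have hn1 : 0 < n j1 := by have := h2 j1 hj1; omega
    have hn2 : 0 < n j2 := by have := h2 j2 hj2; omega
    have hd : Nat.lcm (n j1) (n j2) ≤ n j1 * n j2 :=
      Nat.le_of_dvd (by positivity) (Nat.lcm_dvd (dvd_mul_right _ _) (dvd_mul_left _ _))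
    have e1 : Nat.lcm (n j1) (n j2) / n j1 ≤ n j2 := by
      have h := Nat.div_le_div_right (c := n j1) hd
      rwa [Nat.mul_div_cancel_left _ hn1] at h
    have e2 : Nat.lcm (n j1) (n j2) / n j2 ≤ n j1 := by
      have h := Nat.div_le_div_right (c := n j2) hd
      rwa [Nat.mul_div_cancel _ hn2] at h
    refine (wP_td 𝕜 k n j1 j2).trans ?_
    have := hnN j1; have := hnN j2; omega
  · obtain ⟨j, _, _, rfl⟩ := ht
    exact (zP_td 𝕜 k n j).trans (by omega)
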